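/- Let n ≥ 2, let U ⊆ ℝⁿ be an open set on which the coordinates are pairwise distinct (x_i ≠ x_j on U for all i ≠ j), and let m₁,…,mₙ : ℝ → ℝ be differentiable. Then the function M(x) = ∑_{i=1}^{n} m_i(x_i) / ∏_{j≠i}(x_i − x_j) satisfies, for all i < j and all x ∈ U, the Euler–Poisson–Darboux equation (x_i − x_j) ∂_i∂_j M − ∂_i M + ∂_j M = 0. -/

import Mathlib

theorem deriv_shift {f : ℝ → ℝ} {c v : ℝ} (hf : HasDerivAt f v c) :
    deriv (fun t => f (c + t)) 0 = v := by
  have h1 : HasDerivAt (fun t : ℝ => c + t) 1 0 := (hasDerivAt_id 0).const_add c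
  have h2 : HasDerivAt f v ((fun t : ℝ => c + t) 0) := by simpa using hf
  have h3 := (h2.comp 0 h1).deriv
  rw [mul_one] at h3
  exact h3



/-- The partial derivative of `f : ℝⁿ → ℝ` in the `i`-th coordinate direction,
taken as a line (directional) derivative. -/
noncomputable def pd {n : ℕ} (i : Fin n) (f : (Fin n → ℝ) → ℝ) (x : Fin n → ℝ) : ℝ :=
  lineDeriv ℝ f x (Pi.single i 1)

/-- Darboux's function `M(x) = ∑ i, m i (x i) / ∏_{j ≠ i} (x i - x j)` solves the
Euler–Poisson–Darboux system `(x i - x j) ∂ᵢ∂ⱼM - ∂ᵢM + ∂ⱼM = 0` (`i < j`) on any open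
set `U` on which the coordinates are pairwise distinct, provided the `m i` are
differentiable. -/
theorem epd_of_darboux_form (n : ℕ) (hn : 2 ≤ n)
    (U : Set (Fin n → ℝ)) (hU : IsOpen U)
    (hdist : ∀ x ∈ U, ∀ i j : Fin n, i ≠ j → x i ≠ x j)
    (m : Fin n → ℝ → ℝ) (hm : ∀ i, Differentiable ℝ (m i))
    (M : (Fin n → ℝ) → ℝ)
    (hM : ∀ x, M x = ∑ i : Fin n, m i (x i) / ∏ j ∈ Finset.univ.erase i, (x i - x j)) :
    ∀ i j : Fin n, i < j → ∀ x ∈ U,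
      (x i - x j) * pd i (pd j M) x - pd i M x + pd j M x = 0 := by
  intro i j hlt x hx
  have hij' : i ≠ j := ne_of_lt hlt
  have hne : ∀ k l : Fin n, k ≠ l → x k ≠ x l := hdist x hx
  set K : Finset (Fin n) := (Finset.univ.erase i).erase j with hKdef
  have hKne : ∀ l ∈ K, l ≠ i ∧ l ≠ j := fun l hl =>
    ⟨(Finset.mem_erase.1 (Finset.mem_erase.1 hl).2).1, (Finset.mem_erase.1 hl).1⟩
  have hjK : j ∉ K := Finset.notMem_erase j _
  have hiK : i ∉ K := fun h => (hKne i h).1 rfl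
  have hins1 : insert j K = Finset.univ.erase i :=
    Finset.insert_erase (Finset.mem_erase.2 ⟨hij'.symm, Finset.mem_univ j⟩)
  have huniv : (Finset.univ : Finset (Fin n)) = insert i (insert j K) := by
    rw [hins1, Finset.insert_erase (Finset.mem_univ i)]
  have hins2 : insert i K = Finset.univ.erase j := by
    rw [hKdef, Finset.erase_right_comm,
      Finset.insert_erase (Finset.mem_erase.2 ⟨hij', Finset.mem_univ i⟩)]
  have hinotjK : i ∉ insert j K := by simp [hij', hiK]
  have huk : ∀ k ∈ K, Finset.univ.erase k = insert i (insert j (K.erase k)) := by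
    intro k hk
    have e1 : ((Finset.univ.erase k).erase i).erase j = K.erase k := by
      rw [hKdef, Finset.erase_right_comm (a := k) (b := i)]
      exact Finset.erase_right_comm (a := k) (b := j)
    have h2 : insert j (K.erase k) = (Finset.univ.erase k).erase i := by
      rw [← e1]
      exact Finset.insert_erase (Finset.mem_erase.2 ⟨hij'.symm,
        Finset.mem_erase.2 ⟨Ne.symm (hKne k hk).2, Finset.mem_univ j⟩⟩)
    rw [h2, Finset.insert_erase (Finset.mem_erase.2 ⟨Ne.symm (hKne k hk).1, Finset.mem_univ i⟩)]
  set p : ℝ → ℝ := fun t => ∏ l ∈ K, (t - x l) with hpdef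
  set q : Fin n → ℝ := fun k => ∏ l ∈ K.erase k, (x k - x l) with hqdef
  have hp' : ∀ c : ℝ, HasDerivAt p (deriv p c) c := by
    intro c
    have h := HasDerivAt.fun_finsetProd (u := K) (f := fun l (t : ℝ) => t - x l)
      (f' := fun _ => (1 : ℝ)) (x := c) (fun l _ => (hasDerivAt_id' c).sub_const (x l))
    exact h.differentiableAt.hasDerivAt
  have hd : x i - x j ≠ 0 := sub_ne_zero.2 (hne i j hij')
  have hd' : x j - x i ≠ 0 := sub_ne_zero.2 (hne j i hij'.symm)
  have hpi : p (x i) ≠ 0 := by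
    simp only [hpdef]
    exact Finset.prod_ne_zero_iff.2 fun l hl => sub_ne_zero.2 (hne i l (Ne.symm (hKne l hl).1))
  have hpj : p (x j) ≠ 0 := by
    simp only [hpdef]
    exact Finset.prod_ne_zero_iff.2 fun l hl => sub_ne_zero.2 (hne j l (Ne.symm (hKne l hl).2))
  have hq0 : ∀ k ∈ K, q k ≠ 0 := by
    intro k hk
    simp only [hqdef]
    exact Finset.prod_ne_zero_iff.2 fun l hl =>
      sub_ne_zero.2 (hne k l (Ne.symm (Finset.ne_of_mem_erase hl)))
  set Φ : ℝ → ℝ → ℝ := fun a b =>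
    m i a / ((a - b) * p a) +
      (m j b / ((b - a) * p b) +
        ∑ k ∈ K, m k (x k) / (((x k - a) * (x k - b)) * q k)) with hΦdef
  set Ψ1 : ℝ → ℝ := fun a => m i a * p a / ((a - x j) * p a) ^ 2 with hΨ1def
  set Ψ2 : ℝ → ℝ := fun a =>
    (deriv (m j) (x j) * ((x j - a) * p (x j)) -
        m j (x j) * (1 * p (x j) + (x j - a) * deriv p (x j))) /
      ((x j - a) * p (x j)) ^ 2 with hΨ2def
  set Ψ3 : Fin n → ℝ → ℝ := fun k a =>
    m k (x k) * ((x k - a) * q k) / (((x k - a) * (x k - x j)) * q k) ^ 2 with hΨ3def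
  set Ψ : ℝ → ℝ := fun a => Ψ1 a + (Ψ2 a + ∑ k ∈ K, Ψ3 k a) with hΨdef
  -- the first partial derivative in direction j
  have hΨat : ∀ a : ℝ, a - x j ≠ 0 → (∀ l ∈ K, a - x l ≠ 0) → HasDerivAt (Φ a) (Ψ a) (x j) := by
    intro a hab hal
    have hpa : p a ≠ 0 := by
      simp only [hpdef]
      exact Finset.prod_ne_zero_iff.2 hal
    have h1 : HasDerivAt (fun b => m i a / ((a - b) * p a)) (Ψ1 a) (x j) := by
      have h := (hasDerivAt_const (x j) (m i a)).fun_div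
        ((HasDerivAt.const_sub a (hasDerivAt_id' (x j))).mul_const (p a))
        (mul_ne_zero hab hpa)
      simp only [hΨ1def]
      exact h.congr_deriv (by ring)
    have h2 : HasDerivAt (fun b => m j b / ((b - a) * p b)) (Ψ2 a) (x j) := by
      have h := ((hm j (x j)).hasDerivAt).fun_div
        (((hasDerivAt_id' (x j)).sub_const a).fun_mul (hp' (x j)))
        (mul_ne_zero (by simpa [sub_ne_zero] using (sub_ne_zero.1 hab).symm) hpj)
      simpa only [hΨ2def] using h
    have h3 : HasDerivAt (fun b => ∑ k ∈ K, m k (x k) / (((x k - a) * (x k - b)) * q k))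
        (∑ k ∈ K, Ψ3 k a) (x j) := by
      refine HasDerivAt.fun_sum fun k hk => ?_
      have hka : x k - a ≠ 0 := sub_ne_zero.2 (fun h => (sub_ne_zero.1 (hal k hk)) h.symm)
      have hkb : x k - x j ≠ 0 := sub_ne_zero.2 (hne k j (hKne k hk).2)
      have h := (hasDerivAt_const (x j) (m k (x k))).fun_div
        (((HasDerivAt.const_sub (x k) (hasDerivAt_id' (x j))).const_mul (x k - a)).mul_const (q k))
        (mul_ne_zero (mul_ne_zero hka hkb) (hq0 k hk))
      simp only [hΨ3def]
      exact h.congr_deriv (by ring)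
    exact h1.add (h2.add h3)
  -- values of M along the 2-plane through x in directions i, j
  have hMΦ : ∀ s t : ℝ,
      M (x + s • (Pi.single i 1 : Fin n → ℝ) + t • (Pi.single j 1 : Fin n → ℝ)) = Φ (x i + s) (x j + t) := by
    intro s t
    have hX : (x + s • (Pi.single i 1 : Fin n → ℝ) + t • (Pi.single j 1 : Fin n → ℝ)) =
        fun l => if l = i then x i + s else if l = j then x j + t else x l := by
      funext l
      by_cases h1 : l = i
      · subst h1; simp [Pi.single_apply, hij']
      · by_cases h2 : l = j
        · subst h2; simp [Pi.single_apply, Ne.symm hij', h1]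
        · simp [Pi.single_apply, h1, h2]
    set Y : Fin n → ℝ := fun l => if l = i then x i + s else if l = j then x j + t else x l with hYdef
    have hYi : Y i = x i + s := by simp [hYdef]
    have hYj : Y j = x j + t := by simp [hYdef, Ne.symm hij']
    have hYl : ∀ l ∈ K, Y l = x l := by
      intro l hl
      simp [hYdef, (hKne l hl).1, (hKne l hl).2]
    set F : Fin n → ℝ := fun k => m k (Y k) / ∏ r ∈ Finset.univ.erase k, (Y k - Y r) with hFdef
    have hFi : F i = m i (x i + s) / (((x i + s) - (x j + t)) * p (x i + s)) := by
      simp only [hFdef]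
      rw [hYi, ← hins1, Finset.prod_insert hjK, hYj,
        show (∏ r ∈ K, (x i + s - Y r)) = p (x i + s) from by
          simp only [hpdef]; exact Finset.prod_congr rfl fun l hl => by rw [hYl l hl]]
    have hFj : F j = m j (x j + t) / (((x j + t) - (x i + s)) * p (x j + t)) := by
      simp only [hFdef]
      rw [hYj, ← hins2, Finset.prod_insert hiK, hYi,
        show (∏ r ∈ K, (x j + t - Y r)) = p (x j + t) from by
          simp only [hpdef]; exact Finset.prod_congr rfl fun l hl => by rw [hYl l hl]]
    have hFk : ∀ k ∈ K, F k = m k (x k) / (((x k - (x i + s)) * (x k - (x j + t))) * q k) := by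
      intro k hk
      simp only [hFdef]
      rw [hYl k hk, huk k hk, Finset.prod_insert (by simp [hij', hiK]),
        Finset.prod_insert (fun h => hjK (Finset.mem_of_mem_erase h)), hYi, hYj,
        show (∏ r ∈ K.erase k, (x k - Y r)) = q k from by
          simp only [hqdef]
          exact Finset.prod_congr rfl fun l hl => by rw [hYl l (Finset.mem_of_mem_erase hl)],
        mul_assoc]
    rw [hX]
    calc M Y = ∑ k : Fin n, F k := by rw [hM]
      _ = F i + (F j + ∑ k ∈ K, F k) := by
          rw [huniv, Finset.sum_insert hinotjK, Finset.sum_insert hjK]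
      _ = Φ (x i + s) (x j + t) := by
          rw [hFi, hFj, Finset.sum_congr rfl hFk]
  -- outer derivatives
  set Da1 : ℝ := (deriv (m i) (x i) * ((x i - x j) * p (x i)) -
      m i (x i) * (1 * p (x i) + (x i - x j) * deriv p (x i))) / ((x i - x j) * p (x i)) ^ 2
    with hDa1def
  set Da2 : ℝ := m j (x j) * p (x j) / ((x j - x i) * p (x j)) ^ 2 with hDa2def
  set Da3 : Fin n → ℝ := fun k =>
    m k (x k) * ((x k - x j) * q k) / (((x k - x i) * (x k - x j)) * q k) ^ 2 with hDa3def
  set Dab1 : ℝ := ((deriv (m i) (x i) * p (x i) + m i (x i) * deriv p (x i)) *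
        ((x i - x j) * p (x i)) ^ 2 -
      m i (x i) * p (x i) *
        (2 * ((x i - x j) * p (x i)) * (1 * p (x i) + (x i - x j) * deriv p (x i)))) /
      (((x i - x j) * p (x i)) ^ 2) ^ 2 with hDab1def
  set Dab2 : ℝ := ((deriv (m j) (x j) * (-1 * p (x j)) - m j (x j) * (-1 * deriv p (x j))) *
        ((x j - x i) * p (x j)) ^ 2 -
      (deriv (m j) (x j) * ((x j - x i) * p (x j)) -
          m j (x j) * (1 * p (x j) + (x j - x i) * deriv p (x j))) *
        (2 * ((x j - x i) * p (x j)) * (-1 * p (x j)))) /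
      (((x j - x i) * p (x j)) ^ 2) ^ 2 with hDab2def
  set Dab3 : Fin n → ℝ := fun k =>
    m k (x k) * q k * ((((x k - x i) * (x k - x j)) * q k) ^ 2) /
      ((((x k - x i) * (x k - x j)) * q k) ^ 2) ^ 2 with hDab3def
  have hDa : HasDerivAt (fun a => Φ a (x j)) (Da1 + (Da2 + ∑ k ∈ K, Da3 k)) (x i) := by
    simp only [hΦdef]
    have h1 : HasDerivAt (fun a => m i a / ((a - x j) * p a)) Da1 (x i) := by
      have h := ((hm i (x i)).hasDerivAt).fun_div
        (((hasDerivAt_id' (x i)).sub_const (x j)).fun_mul (hp' (x i))) (mul_ne_zero hd hpi)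
      simpa only [hDa1def] using h
    have h2 : HasDerivAt (fun a => m j (x j) / ((x j - a) * p (x j))) Da2 (x i) := by
      have h := (hasDerivAt_const (x i) (m j (x j))).fun_div
        ((HasDerivAt.const_sub (x j) (hasDerivAt_id' (x i))).mul_const (p (x j)))
        (mul_ne_zero hd' hpj)
      simp only [hDa2def]
      exact h.congr_deriv (by ring)
    have h3 : HasDerivAt (fun a => ∑ k ∈ K, m k (x k) / (((x k - a) * (x k - x j)) * q k))
        (∑ k ∈ K, Da3 k) (x i) := by
      refine HasDerivAt.fun_sum fun k hk => ?_
      have hka : x k - x i ≠ 0 := sub_ne_zero.2 (hne k i (hKne k hk).1)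
      have hkb : x k - x j ≠ 0 := sub_ne_zero.2 (hne k j (hKne k hk).2)
      have h := (hasDerivAt_const (x i) (m k (x k))).fun_div
        (((HasDerivAt.const_sub (x k) (hasDerivAt_id' (x i))).mul_const (x k - x j)).mul_const (q k))
        (mul_ne_zero (mul_ne_zero hka hkb) (hq0 k hk))
      simp only [hDa3def]
      exact h.congr_deriv (by ring)
    exact h1.add (h2.add h3)
  have hDab : HasDerivAt Ψ (Dab1 + (Dab2 + ∑ k ∈ K, Dab3 k)) (x i) := by
    simp only [hΨdef, hΨ1def, hΨ2def, hΨ3def]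
    have h1 : HasDerivAt (fun a => m i a * p a / ((a - x j) * p a) ^ 2) Dab1 (x i) := by
      have h := (((hm i (x i)).hasDerivAt).fun_mul (hp' (x i))).fun_div
        (((((hasDerivAt_id' (x i)).sub_const (x j)).fun_mul (hp' (x i))).fun_pow 2))
        (pow_ne_zero 2 (mul_ne_zero hd hpi))
      simp only [hDab1def]
      exact h.congr_deriv (by push_cast; ring)
    have h2 : HasDerivAt (fun a =>
        (deriv (m j) (x j) * ((x j - a) * p (x j)) -
            m j (x j) * (1 * p (x j) + (x j - a) * deriv p (x j))) /
          ((x j - a) * p (x j)) ^ 2) Dab2 (x i) := by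
      have hnum : HasDerivAt (fun a =>
          deriv (m j) (x j) * ((x j - a) * p (x j)) -
            m j (x j) * (1 * p (x j) + (x j - a) * deriv p (x j)))
          (deriv (m j) (x j) * (-1 * p (x j)) - m j (x j) * (-1 * deriv p (x j))) (x i) := by
        have ha := ((HasDerivAt.const_sub (x j) (hasDerivAt_id' (x i))).mul_const
          (p (x j))).const_mul (deriv (m j) (x j))
        have hb := (((HasDerivAt.const_sub (x j) (hasDerivAt_id' (x i))).mul_const
          (deriv p (x j))).const_add (1 * p (x j))).const_mul (m j (x j))
        exact ha.sub hb
      have hden := ((HasDerivAt.const_sub (x j) (hasDerivAt_id' (x i))).mul_const (p (x j))).fun_pow 2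
      have h := hnum.fun_div hden (pow_ne_zero 2 (mul_ne_zero hd' hpj))
      simp only [hDab2def]
      exact h.congr_deriv (by push_cast; ring)
    have h3 : HasDerivAt (fun a =>
        ∑ k ∈ K, m k (x k) * ((x k - a) * q k) / (((x k - a) * (x k - x j)) * q k) ^ 2)
        (∑ k ∈ K, Dab3 k) (x i) := by
      refine HasDerivAt.fun_sum fun k hk => ?_
      have hka : x k - x i ≠ 0 := sub_ne_zero.2 (hne k i (hKne k hk).1)
      have hkb : x k - x j ≠ 0 := sub_ne_zero.2 (hne k j (hKne k hk).2)
      have hnum := ((HasDerivAt.const_sub (x k) (hasDerivAt_id' (x i))).mul_const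
        (q k)).const_mul (m k (x k))
      have hden := ((((HasDerivAt.const_sub (x k) (hasDerivAt_id' (x i))).mul_const
        (x k - x j)).mul_const (q k)).fun_pow 2)
      have h := hnum.fun_div hden (pow_ne_zero 2 (mul_ne_zero (mul_ne_zero hka hkb) (hq0 k hk)))
      simp only [hDab3def]
      exact h.congr_deriv (by push_cast; ring)
    exact h1.add (h2.add h3)
  -- identify the partial derivatives
  have hKcond : ∀ l ∈ K, x i - x l ≠ 0 :=
    fun l hl => sub_ne_zero.2 (hne i l (Ne.symm (hKne l hl).1))
  have hpdjx : pd j M x = Ψ (x i) := by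
    show deriv (fun t => M (x + t • (Pi.single j 1 : Fin n → ℝ))) 0 = Ψ (x i)
    have hfun : (fun t => M (x + t • (Pi.single j 1 : Fin n → ℝ))) = fun t => Φ (x i) (x j + t) := by
      funext t
      have h := hMΦ 0 t
      rwa [zero_smul, add_zero, add_zero] at h
    rw [hfun]
    exact deriv_shift (hΨat (x i) hd hKcond)
  have hpdi : pd i M x = Da1 + (Da2 + ∑ k ∈ K, Da3 k) := by
    show deriv (fun s => M (x + s • (Pi.single i 1 : Fin n → ℝ))) 0 = _
    have hfun : (fun s => M (x + s • (Pi.single i 1 : Fin n → ℝ))) = fun s => Φ (x i + s) (x j) := by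
      funext s
      have h := hMΦ s 0
      rwa [zero_smul, add_zero, add_zero] at h
    rw [hfun]
    exact deriv_shift hDa
  have hpdij : pd i (pd j M) x = Dab1 + (Dab2 + ∑ k ∈ K, Dab3 k) := by
    show deriv (fun s => pd j M (x + s • (Pi.single i 1 : Fin n → ℝ))) 0 = _
    have hc : Filter.Tendsto (fun s : ℝ => x i + s) (nhds 0) (nhds (x i)) := by
      simpa using (continuous_add_left (x i)).tendsto (0 : ℝ)
    have h1 : ∀ᶠ s : ℝ in nhds 0, x i + s ≠ x j := hc.eventually_ne (hne i j hij')
    have h2 : ∀ᶠ s : ℝ in nhds 0, ∀ l ∈ K, x i + s ≠ x l :=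
      (Finset.eventually_all K).2 fun l hl => hc.eventually_ne (hne i l (Ne.symm (hKne l hl).1))
    have hev : (fun s => pd j M (x + s • (Pi.single i 1 : Fin n → ℝ))) =ᶠ[nhds (0 : ℝ)]
        fun s => Ψ (x i + s) := by
      filter_upwards [h1, h2] with s hs1 hs2
      show deriv (fun t => M (x + s • (Pi.single i 1 : Fin n → ℝ) + t • (Pi.single j 1 : Fin n → ℝ))) 0 = Ψ (x i + s)
      have hfun : (fun t => M (x + s • (Pi.single i 1 : Fin n → ℝ) + t • (Pi.single j 1 : Fin n → ℝ))) =
          fun t => Φ (x i + s) (x j + t) := funext fun t => hMΦ s t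
      rw [hfun]
      exact deriv_shift (hΨat (x i + s) (sub_ne_zero.2 hs1)
        (fun l hl => sub_ne_zero.2 (hs2 l hl)))
    rw [hev.deriv_eq]
    exact deriv_shift hDab
  rw [hpdij, hpdi, hpdjx]
  simp only [hΨdef]
  have e1 : (x i - x j) * Dab1 - Da1 + Ψ1 (x i) = 0 := by
    simp only [hDab1def, hDa1def, hΨ1def]
    field_simp
    ring
  have e2 : (x i - x j) * Dab2 - Da2 + Ψ2 (x i) = 0 := by
    simp only [hDab2def, hDa2def, hΨ2def]
    field_simp
    ring
  have e3 : ∀ k ∈ K, (x i - x j) * Dab3 k - Da3 k + Ψ3 k (x i) = 0 := by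
    intro k hk
    have hka : x k - x i ≠ 0 := sub_ne_zero.2 (hne k i (hKne k hk).1)
    have hkb : x k - x j ≠ 0 := sub_ne_zero.2 (hne k j (hKne k hk).2)
    have hqk := hq0 k hk
    simp only [hDab3def, hDa3def, hΨ3def]
    field_simp
    ring
  have hsum : (x i - x j) * (∑ k ∈ K, Dab3 k) - (∑ k ∈ K, Da3 k) + (∑ k ∈ K, Ψ3 k (x i)) = 0 := by
    calc (x i - x j) * (∑ k ∈ K, Dab3 k) - (∑ k ∈ K, Da3 k) + (∑ k ∈ K, Ψ3 k (x i))
        = ∑ k ∈ K, ((x i - x j) * Dab3 k - Da3 k + Ψ3 k (x i)) := by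
          rw [Finset.sum_add_distrib, Finset.sum_sub_distrib, Finset.mul_sum]
      _ = ∑ k ∈ K, (0 : ℝ) := Finset.sum_congr rfl e3
      _ = 0 := Finset.sum_const_zero
  linear_combination e1 + e2 + hsum
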